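/- If κ is a μ-supercompact cardinal, μ > κ is regular, S ⊆ E^μ_{<κ} is stationary, and A is an algebra on μ with fewer than κ operations, then there exists a set X generating a subalgebra B of A such that the order type of B equals the order type of X, this order type is a regular cardinal below κ, and S ∩ B is stationary in sup(B). -/

import Mathlib

/-- `β` is an accumulation point of `C`. -/
def accPts (C : Set Ordinal) : Set Ordinal :=
  {β | 0 < β ∧ ∀ x < β, ∃ y ∈ C, x < y ∧ y < β}

/-- `C` is a closed unbounded subset of the ordinal `σ`. -/
def IsClubIn (C : Set Ordinal) (σ : Ordinal) : Prop :=
  C ⊆ Set.Iio σ ∧ (∀ α < σ, ∃ β ∈ C, α ≤ β) ∧ ∀ α < σ, α ∈ accPts C → α ∈ C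

/-- `S` is stationary in the ordinal `σ`. -/
def IsStatIn (S : Set Ordinal) (σ : Ordinal) : Prop :=
  ∀ C, IsClubIn C σ → (S ∩ C).Nonempty

/-- `P_κ(μ)`: subsets of `μ` of size `< κ`. -/
def Pk (κ μ : Cardinal.{0}) :=
  {x : Set Ordinal // x ⊆ Set.Iio μ.ord ∧ Cardinal.mk ↥x < Cardinal.lift.{1} κ}

/-- `U` is a normal, fine, `κ`-complete ultrafilter on `P_κ(μ)`; the existence of such an
ultrafilter is equivalent to `κ` being `μ`-supercompact. -/
def IsNormalFineUF (κ μ : Cardinal) (U : Set (Set (Pk κ μ))) : Prop :=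
  Set.univ ∈ U ∧ ∅ ∉ U ∧
  (∀ A B : Set (Pk κ μ), A ∈ U → A ⊆ B → B ∈ U) ∧
  (∀ A B : Set (Pk κ μ), A ∈ U → B ∈ U → A ∩ B ∈ U) ∧
  (∀ A : Set (Pk κ μ), A ∈ U ∨ (Set.univ \ A) ∈ U) ∧
  -- κ-completeness
  (∀ o : Ordinal, o < κ.ord → ∀ f : Ordinal → Set (Pk κ μ),
    (∀ i, i < o → f i ∈ U) → {x | ∀ i, i < o → x ∈ f i} ∈ U) ∧
  -- fineness
  (∀ α, α < μ.ord → {x : Pk κ μ | α ∈ x.val} ∈ U) ∧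
  -- normality: every choice function is constant on a large set
  (∀ F : Pk κ μ → Ordinal, {x | F x ∈ x.val} ∈ U → ∃ α, {x | F x = α} ∈ U)

/-- `B` is closed under all the operations of the algebra. -/
def ClosedUnderOps {ι : Type} (n : ι → ℕ) (f : ∀ i, (Fin (n i) → Ordinal) → Ordinal)
    (B : Set Ordinal) : Prop :=
  ∀ i (v : Fin (n i) → Ordinal), (∀ j, v j ∈ B) → f i v ∈ B

/-- `B` is the subalgebra generated by `X`. -/
def GeneratedBy {ι : Type} (n : ι → ℕ) (f : ∀ i, (Fin (n i) → Ordinal) → Ordinal)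
    (X B : Set Ordinal) : Prop :=
  X ⊆ B ∧ ClosedUnderOps n f B ∧ ∀ B', X ⊆ B' → ClosedUnderOps n f B' → B ⊆ B'

/-- The order type of a set of ordinals. -/
noncomputable def SetOType (s : Set Ordinal) : Ordinal.{1} :=
  Ordinal.type (Subrel ((· < ·) : Ordinal → Ordinal → Prop) (· ∈ s))

set_option autoImplicit false
open Cardinal Ordinal Set

section Helpers

variable {κ μ : Cardinal.{0}} {U : Set (Set (Pk κ μ))}

lemma U_ne {A : Set (Pk κ μ)} (hU : IsNormalFineUF κ μ U) (hA : A ∈ U) : A.Nonempty := by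
  rcases Set.eq_empty_or_nonempty A with h | h
  · exact absurd (h ▸ hA) hU.2.1
  · exact h

lemma U_inter3 (hU : IsNormalFineUF κ μ U) {A B C : Set (Pk κ μ)}
    (hA : A ∈ U) (hB : B ∈ U) (hC : C ∈ U) : A ∩ B ∩ C ∈ U :=
  hU.2.2.2.1 _ _ (hU.2.2.2.1 _ _ hA hB) hC

lemma muord_limit (hμ : μ.IsRegular) : Order.IsSuccLimit μ.ord :=
  Cardinal.isSuccLimit_ord hμ.aleph0_le

lemma bddx (x : Pk κ μ) : BddAbove x.val :=
  ⟨μ.ord, fun _ hy => le_of_lt (x.2.1 hy)⟩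

lemma sSup_inter_Iio_le (s : Set Ordinal) (a : Ordinal) : sSup (s ∩ Set.Iio a) ≤ a :=
  csSup_le' (fun _ hb => le_of_lt hb.2)

lemma exists_lt_of_lt_sSup' {s : Set Ordinal} {c : Ordinal} (h : c < sSup s) :
    ∃ y ∈ s, c < y := by
  by_contra hcon
  push_neg at hcon
  exact absurd (csSup_le' hcon) (not_le.2 h)

/-- pressing down / normality helper -/
lemma press (hU : IsNormalFineUF κ μ U) (P : Pk κ μ → Ordinal → Prop)
    (h : {x : Pk κ μ | ∃ α ∈ x.val, P x α} ∈ U) :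
    ∃ α, α < μ.ord ∧ {x : Pk κ μ | α ∈ x.val ∧ P x α} ∈ U := by
  classical
  set F : Pk κ μ → Ordinal := fun x => if hx : ∃ α ∈ x.val, P x α then hx.choose else 0 with hF
  have hFx : ∀ x : Pk κ μ, (∃ α ∈ x.val, P x α) → F x ∈ x.val ∧ P x (F x) := by
    intro x hx
    simp only [hF, dif_pos hx]
    exact ⟨hx.choose_spec.1, hx.choose_spec.2⟩
  have h1 : {x : Pk κ μ | F x ∈ x.val} ∈ U :=
    hU.2.2.1 _ _ h (fun x hx => (hFx x hx).1)
  obtain ⟨α₀, hα₀⟩ := hU.2.2.2.2.2.2.2 F h1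
  have hsub : {x : Pk κ μ | F x = α₀} ∩ {x : Pk κ μ | ∃ α ∈ x.val, P x α} ⊆
      {x : Pk κ μ | α₀ ∈ x.val ∧ P x α₀} := by
    rintro x ⟨hx1, hx2⟩
    have := hFx x hx2
    rw [hx1] at this
    exact this
  have hmem : {x : Pk κ μ | α₀ ∈ x.val ∧ P x α₀} ∈ U :=
    hU.2.2.1 _ _ (hU.2.2.2.1 _ _ hα₀ h) hsub
  obtain ⟨x, hx⟩ := U_ne hU hmem
  exact ⟨α₀, x.2.1 hx.1, hmem⟩

lemma kappa_big (hμ : μ.IsRegular) (hκμ : κ < μ) (hU : IsNormalFineUF κ μ U) : ℵ₀ < κ := by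
  by_contra hcon
  push_neg at hcon
  have hfin : ∀ x : Pk κ μ, x.val.Finite := by
    intro x
    have h2 : Cardinal.lift.{1} κ ≤ Cardinal.aleph0.{1} := Cardinal.lift_le_aleph0.2 hcon
    exact Cardinal.lt_aleph0_iff_set_finite.1 (lt_of_lt_of_le x.2.2 h2)
  have h0 : (0 : Ordinal) < μ.ord := (muord_limit hμ).pos
  have h1 : {x : Pk κ μ | ∃ α ∈ x.val, ∀ b ∈ x.val, b ≤ α} ∈ U := by
    refine hU.2.2.1 _ _ (hU.2.2.2.2.2.2.1 0 h0) ?_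
    intro x hx
    obtain ⟨a, ha, hmax⟩ := Set.Finite.exists_maximalFor id x.val (hfin x) ⟨0, hx⟩
    refine ⟨a, ha, fun b hb => ?_⟩
    rcases le_total b a with h | h
    · exact h
    · exact hmax hb h
  obtain ⟨α₀, hα₀μ, hα₀⟩ := press hU _ h1
  have hsucc : α₀ + 1 < μ.ord := (muord_limit hμ).succ_lt hα₀μ
  obtain ⟨x, hx1, hx2⟩ := U_ne hU (hU.2.2.2.1 _ _ hα₀ (hU.2.2.2.2.2.2.1 _ hsucc))
  exact absurd (hx1.2 _ hx2) (not_le.2 (Order.lt_succ α₀))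

/-- completeness over an arbitrary small index type -/
lemma comp' (hU : IsNormalFineUF κ μ U) {ιT : Type} (hι : Cardinal.mk ιT < κ)
    (A : ιT → Set (Pk κ μ)) (hA : ∀ i, A i ∈ U) : {x : Pk κ μ | ∀ i, x ∈ A i} ∈ U := by
  classical
  rcases isEmpty_or_nonempty ιT with hemp | hne
  · exact hU.2.2.1 _ _ hU.1 (fun x _ i => (IsEmpty.false i).elim)
  · set o : Ordinal := (Cardinal.mk ιT).ord with ho
    have hoκ : o < κ.ord := Cardinal.ord_lt_ord.2 hι
    have hcard : Cardinal.mk o.ToType = Cardinal.mk ιT := Cardinal.mk_ord_toType _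
    obtain ⟨e⟩ := Cardinal.eq.1 hcard
    set g : Ordinal → ιT := fun j =>
      if h : j < o then e ((Ordinal.ToType.mk (o := o)) ⟨j, h⟩) else Classical.arbitrary ιT with hg
    have hcomp := hU.2.2.2.2.2.1 o hoκ (fun j => A (g j)) (fun j _ => hA _)
    have hgj : ∀ jj : Set.Iio o, g jj.1 = e ((Ordinal.ToType.mk (o := o)) jj) :=
      fun jj => dif_pos jj.2
    refine hU.2.2.1 _ _ hcomp ?_
    intro x hx i
    have hx' : ∀ j, j < o → x ∈ A (g j) := hx
    set j : Set.Iio o := (Ordinal.ToType.mk (o := o)).symm (e.symm i) with hj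
    have h2 : x ∈ A (g j.1) := hx' j.1 j.2
    rwa [hgj j, hj, OrderIso.apply_symm_apply, Equiv.apply_symm_apply] at h2

/-- one-dimensional diagonal intersection -/
lemma diag1 (hU : IsNormalFineUF κ μ U) (A : Ordinal → Set (Pk κ μ))
    (hA : ∀ α < μ.ord, A α ∈ U) : {x : Pk κ μ | ∀ α ∈ x.val, x ∈ A α} ∈ U := by
  have hN : {x : Pk κ μ | ∃ α ∈ x.val, x ∉ A α} ∉ U := by
    intro hN
    obtain ⟨α₀, hα₀μ, hα₀⟩ := press hU (fun x α => x ∉ A α) hN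
    obtain ⟨x, hx1, hx2⟩ := U_ne hU (hU.2.2.2.1 _ _ hα₀ (hA α₀ hα₀μ))
    exact hx1.2 hx2
  rcases hU.2.2.2.2.1 {x : Pk κ μ | ∃ α ∈ x.val, x ∉ A α} with h | h
  · exact absurd h hN
  · refine hU.2.2.1 _ _ h ?_
    rintro x ⟨-, hx⟩ α hα
    simp only [Set.mem_setOf_eq, not_exists] at hx
    by_contra hcon
    exact hx α ⟨hα, hcon⟩

/-- multi-dimensional diagonal intersection -/
lemma diagm (hU : IsNormalFineUF κ μ U) :
    ∀ (m : ℕ) (A : (Fin m → Ordinal) → Set (Pk κ μ)),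
      (∀ v, (∀ j, v j < μ.ord) → A v ∈ U) →
      {x : Pk κ μ | ∀ v, (∀ j, v j ∈ x.val) → x ∈ A v} ∈ U := by
  intro m
  induction m with
  | zero =>
    intro A hA
    have h := hA (fun j => j.elim0) (fun j => j.elim0)
    refine hU.2.2.1 _ _ h ?_
    intro x hx v _
    have hv : v = fun j => j.elim0 := funext fun j => j.elim0
    rwa [hv]
  | succ m ih =>
    intro A hA
    classical
    set A' : Ordinal → Set (Pk κ μ) := fun α =>
      if α < μ.ord then {x : Pk κ μ | ∀ v, (∀ j, v j ∈ x.val) → x ∈ A (Fin.cons α v)}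
      else Set.univ with hA'def
    have hA' : ∀ α < μ.ord, A' α ∈ U := by
      intro α hα
      have h2 : {x : Pk κ μ | ∀ v, (∀ j, v j ∈ x.val) → x ∈ A (Fin.cons α v)} ∈ U := by
        refine ih _ (fun v hv => hA _ ?_)
        intro j
        refine Fin.cases ?_ ?_ j
        · rwa [Fin.cons_zero]
        · intro k; rw [Fin.cons_succ]; exact hv k
      have : A' α = {x : Pk κ μ | ∀ v, (∀ j, v j ∈ x.val) → x ∈ A (Fin.cons α v)} := by
        rw [hA'def]; exact if_pos hα
      rwa [this]
    have hd := diag1 hU A' hA'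
    refine hU.2.2.1 _ _ hd ?_
    intro x hx v hv
    have h0 : v 0 ∈ x.val := hv 0
    have hα : v 0 < μ.ord := x.2.1 h0
    have h1 : x ∈ A' (v 0) := hx (v 0) h0
    have hto : A' (v 0) = {x : Pk κ μ | ∀ w, (∀ j, w j ∈ x.val) → x ∈ A (Fin.cons (v 0) w)} := by
      rw [hA'def]; exact if_pos hα
    rw [hto] at h1
    have h2 : x ∈ A (Fin.cons (v 0) (Fin.tail v)) := h1 (Fin.tail v) (fun j => hv j.succ)
    rwa [Fin.cons_self_tail] at h2

/-- almost every `x` is closed under the operations -/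
lemma closure_ae (hU : IsNormalFineUF κ μ U) {ι : Type} (hι : Cardinal.mk ι < κ)
    (n : ι → ℕ) (f : ∀ i, (Fin (n i) → Ordinal) → Ordinal)
    (hf : ∀ i v, (∀ j, v j < μ.ord) → f i v < μ.ord) :
    {x : Pk κ μ | ClosedUnderOps n f x.val} ∈ U := by
  classical
  set Ai : ∀ i : ι, (Fin (n i) → Ordinal) → Set (Pk κ μ) := fun i v =>
    if h : ∀ j, v j < μ.ord then {x : Pk κ μ | f i v ∈ x.val} else Set.univ with hAidef
  have hG : ∀ i, {x : Pk κ μ | ∀ v, (∀ j, v j ∈ x.val) → x ∈ Ai i v} ∈ U := by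
    intro i
    refine diagm hU (n i) (Ai i) (fun v hv => ?_)
    have : Ai i v = {x : Pk κ μ | f i v ∈ x.val} := by rw [hAidef]; exact dif_pos hv
    rw [this]
    exact hU.2.2.2.2.2.2.1 _ (hf i v hv)
  have hcomp := comp' hU hι _ hG
  refine hU.2.2.1 _ _ hcomp ?_
  intro x hx i v hv
  have h2 : x ∈ Ai i v := hx i v hv
  have : Ai i v = {x : Pk κ μ | f i v ∈ x.val} := by
    rw [hAidef]; exact dif_pos (fun j => x.2.1 (hv j))
  rw [this] at h2
  exact h2

/-- almost every `x` contains all the natural numbers -/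
lemma nat_subset_ae (hU : IsNormalFineUF κ μ U) (hμ : μ.IsRegular) (hκ : ℵ₀ < κ) :
    {x : Pk κ μ | ∀ m : ℕ, (m : Ordinal) ∈ x.val} ∈ U := by
  have homega : (Ordinal.omega0 : Ordinal) ≤ μ.ord := by
    rw [← Cardinal.ord_aleph0]
    exact Cardinal.ord_le_ord.2 hμ.aleph0_le
  refine comp' hU (by rwa [Cardinal.mk_nat]) (fun m : ℕ => {x : Pk κ μ | (m : Ordinal) ∈ x.val})
    (fun m => hU.2.2.2.2.2.2.1 _ (lt_of_lt_of_le (Ordinal.nat_lt_omega0 m) homega))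

lemma ot_omega_of (x : Pk κ μ) (hx : ∀ m : ℕ, (m : Ordinal) ∈ x.val) :
    Ordinal.omega0 ≤ SetOType x.val := by
  have hinf : Infinite ↥x.val := by
    refine Infinite.of_injective (fun m : ℕ => (⟨(m : Ordinal), hx m⟩ : ↥x.val)) ?_
    intro a b hab
    have := congrArg Subtype.val hab
    exact Nat.cast_injective this
  have hcard : Cardinal.aleph0.{1} ≤ (SetOType x.val).card := by
    rw [SetOType, Ordinal.card_type]
    exact Cardinal.aleph0_le_mk ↥x.val
  exact Ordinal.aleph0_le_card.1 hcard

/-- almost everywhere, the order type of `x` is (the ordinal of) a regular cardinal -/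
lemma ot_regular_ae (hU : IsNormalFineUF κ μ U) (hμ : μ.IsRegular) :
    {x : Pk κ μ | (SetOType x.val).cof.ord = SetOType x.val} ∈ U := by
  classical
  set T : Set (Pk κ μ) := {x | (SetOType x.val).cof.ord < SetOType x.val} with hTdef
  have hTnot : T ∉ U := by
    intro hT
    -- choose unbounded subsets of minimal cardinality
    have hyx : ∀ x : Pk κ μ, ∃ y : Set Ordinal, y ⊆ x.val ∧ (∀ b ∈ x.val, ∃ c ∈ y, b ≤ c) ∧
        Cardinal.mk ↥y = (SetOType x.val).cof := by
      intro x
      obtain ⟨Sx, hSunb, hSmk⟩ :=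
        Order.exists_cof_eq ↥x.val
      refine ⟨Subtype.val '' Sx, ?_, ?_, ?_⟩
      · rintro c ⟨c', _, rfl⟩; exact c'.2
      · intro b hb
        obtain ⟨s, hs1, hs2⟩ := hSunb ⟨b, hb⟩
        exact ⟨s.1, Set.mem_image_of_mem _ hs1, hs2⟩
      · rw [Cardinal.mk_image_eq Subtype.val_injective, hSmk]; exact (Ordinal.cof_type _).symm
    set y : Pk κ μ → Set Ordinal := fun x => (hyx x).choose with hydef
    have hy1 : ∀ x : Pk κ μ, y x ⊆ x.val := fun x => (hyx x).choose_spec.1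
    have hy2 : ∀ x : Pk κ μ, ∀ b ∈ x.val, ∃ c ∈ y x, b ≤ c := fun x => (hyx x).choose_spec.2.1
    have hy3 : ∀ x : Pk κ μ, Cardinal.mk ↥(y x) = (SetOType x.val).cof :=
      fun x => (hyx x).choose_spec.2.2
    -- an injection of the unbounded set into a proper initial segment
    have hbx : ∀ x ∈ T, ∃ β ∈ x.val, ∃ g : ↥(y x) → Ordinal,
        Function.Injective g ∧ ∀ t, g t ∈ x.val ∧ g t < β := by
      intro x hx
      have hlt : (SetOType x.val).cof.ord <
          Ordinal.type (Subrel ((· < ·) : Ordinal → Ordinal → Prop) (· ∈ x.val)) := hx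
      obtain ⟨b, hb⟩ := Ordinal.typein_surj _ hlt
      refine ⟨b.1, b.2, ?_⟩
      have he : ↥{v : Ordinal | v ∈ x.val ∧ v < b.1} ≃
          ↥{c : ↥x.val | Subrel ((· < ·) : Ordinal → Ordinal → Prop) (· ∈ x.val) c b} :=
        { toFun := fun v => ⟨⟨v.1, v.2.1⟩, v.2.2⟩
          invFun := fun c => ⟨c.1.1, c.1.2, c.2⟩
          left_inv := fun v => rfl
          right_inv := fun c => rfl }
      have hcard2 := Ordinal.card_type
        (Subrel (Subrel ((· < ·) : Ordinal → Ordinal → Prop) (· ∈ x.val))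
          (Subrel ((· < ·) : Ordinal → Ordinal → Prop) (· ∈ x.val) · b))
      rw [Ordinal.type_subrel, hb, Cardinal.card_ord] at hcard2
      have hchain : Cardinal.mk ↥(y x) = Cardinal.mk ↥{v : Ordinal | v ∈ x.val ∧ v < b.1} :=
        (hy3 x).trans (hcard2.trans (Cardinal.mk_congr he).symm)
      obtain ⟨e⟩ := Cardinal.eq.1 hchain
      refine ⟨fun t => (e t).1, fun t t' htt => e.injective (Subtype.ext htt),
        fun t => ⟨(e t).2.1, (e t).2.2⟩⟩
    have hpress : {x : Pk κ μ | ∃ β ∈ x.val, ∃ g : ↥(y x) → Ordinal,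
        Function.Injective g ∧ ∀ t, g t ∈ x.val ∧ g t < β} ∈ U :=
      hU.2.2.1 _ _ hT (fun x hx => hbx x hx)
    obtain ⟨β₀, hβ₀μ, hT2⟩ := press hU _ hpress
    set gx : ∀ x : Pk κ μ, ↥(y x) → Ordinal := fun x =>
      if h : ∃ g : ↥(y x) → Ordinal, Function.Injective g ∧ ∀ t, g t ∈ x.val ∧ g t < β₀
      then h.choose else fun _ => 0 with hgxdef
    have hgx : ∀ x : Pk κ μ,
        (∃ g : ↥(y x) → Ordinal, Function.Injective g ∧ ∀ t, g t ∈ x.val ∧ g t < β₀) →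
        Function.Injective (gx x) ∧ ∀ t, gx x t ∈ x.val ∧ gx x t < β₀ := by
      intro x hx
      have hh : gx x = hx.choose := dif_pos hx
      rw [hh]; exact hx.choose_spec
    set Ypred : Ordinal → Prop := fun α => α < μ.ord ∧ {x : Pk κ μ | α ∈ y x} ∈ U with hYdef
    have hYunb : ∀ b < μ.ord, ∃ α, Ypred α ∧ b ≤ α := by
      intro b hb
      have h1 : {x : Pk κ μ | ∃ α ∈ x.val, α ∈ y x ∧ b ≤ α} ∈ U := by
        refine hU.2.2.1 _ _ (hU.2.2.2.2.2.2.1 b hb) ?_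
        intro x hx
        obtain ⟨c, hc1, hc2⟩ := hy2 x b hx
        exact ⟨c, hy1 x hc1, hc1, hc2⟩
      obtain ⟨α₀, hα₀μ, hα₀⟩ := press hU _ h1
      refine ⟨α₀, ⟨hα₀μ, hU.2.2.1 _ _ hα₀ (fun x hx => hx.2.1)⟩, ?_⟩
      obtain ⟨x, hx⟩ := U_ne hU hα₀
      exact hx.2.2
    set F : Ordinal → Pk κ μ → Ordinal := fun α x =>
      if h : α ∈ y x then gx x ⟨α, h⟩ else 0 with hFdef
    have hFy : ∀ α (x : Pk κ μ) (h : α ∈ y x), F α x = gx x ⟨α, h⟩ := fun α x h => dif_pos h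
    have hnorm : ∀ α, Ypred α → ∃ γ, {x : Pk κ μ | F α x = γ} ∈ U := by
      intro α hα
      refine hU.2.2.2.2.2.2.2 (F α) ?_
      refine hU.2.2.1 _ _ (hU.2.2.2.1 _ _ hT2 hα.2) ?_
      rintro x ⟨hx2, hxy⟩
      have := hFy α x hxy
      simp only [Set.mem_setOf_eq, this]
      exact ((hgx x hx2.2).2 _).1
    set G : Ordinal → Ordinal := fun α =>
      if h : ∃ γ, {x : Pk κ μ | F α x = γ} ∈ U then h.choose else 0 with hGdef
    have hGU : ∀ α, Ypred α → {x : Pk κ μ | F α x = G α} ∈ U := by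
      intro α hα
      have h := hnorm α hα
      have hh : G α = h.choose := dif_pos h
      rw [hh]; exact h.choose_spec
    have hGlt : ∀ α, Ypred α → G α < β₀ := by
      intro α hα
      obtain ⟨x, hx⟩ := U_ne hU (U_inter3 hU (hGU α hα) hT2 hα.2)
      rw [← hx.1.1, hFy α x hx.2]
      exact ((hgx x hx.1.2.2).2 _).2
    have hGinj : ∀ α α', Ypred α → Ypred α' → α ≠ α' → G α ≠ G α' := by
      intro α α' hα hα' hne
      obtain ⟨x, hx⟩ := U_ne hU (hU.2.2.2.1 _ _ (U_inter3 hU (hGU α hα) (hGU α' hα') hT2)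
        (hU.2.2.2.1 _ _ hα.2 hα'.2))
      obtain ⟨⟨⟨h1, h2⟩, h3⟩, h4, h5⟩ := hx
      intro hGG
      rw [← h1, ← h2, hFy α x h4, hFy α' x h5] at hGG
      have := (hgx x h3.2).1 hGG
      exact hne (congrArg Subtype.val this)
    -- endgame : a small family of ordinals cofinal in μ.ord
    set s' : β₀.ToType → Ordinal := fun t =>
      if h : ∃ α, Ypred α ∧ G α = ((Ordinal.ToType.mk (o := β₀)).symm t).1 then h.choose else 0
      with hs'def
    have hs'lt : ∀ t, s' t < μ.ord := by
      intro t
      by_cases h : ∃ α, Ypred α ∧ G α = ((Ordinal.ToType.mk (o := β₀)).symm t).1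
      · have he : s' t = h.choose := dif_pos h
        rw [he]; exact h.choose_spec.1.1
      · have he : s' t = 0 := dif_neg h
        rw [he]; exact (muord_limit hμ).pos
    have hsup : (⨆ t, s' t) < μ.ord := by
      refine Cardinal.iSup_lt_ord_of_isRegular hμ ?_ hs'lt
      rw [Cardinal.mk_toType]
      exact Cardinal.lt_ord.1 hβ₀μ
    have hfin : (⨆ t, s' t) + 1 < μ.ord := by
      rw [Ordinal.add_one_eq_succ]
      exact (muord_limit hμ).succ_lt hsup
    obtain ⟨α, hα, hge⟩ := hYunb _ hfin
    have hGβ : G α < β₀ := hGlt α hα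
    set t : β₀.ToType := Ordinal.ToType.mk (o := β₀) ⟨G α, hGβ⟩ with htdef
    have hval : ((Ordinal.ToType.mk (o := β₀)).symm t).1 = G α := by
      rw [htdef, OrderIso.symm_apply_apply]
    have hex : ∃ α', Ypred α' ∧ G α' = ((Ordinal.ToType.mk (o := β₀)).symm t).1 := ⟨α, hα, hval.symm⟩
    have hst : s' t = α := by
      have he : s' t = hex.choose := dif_pos hex
      obtain ⟨h1, h2⟩ := hex.choose_spec
      have h2' : G hex.choose = G α := h2.trans hval
      by_contra hne
      have hne' : hex.choose ≠ α := fun hh => hne (by rw [he, hh])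
      exact hGinj _ _ h1 hα hne' h2'
    have hle : α ≤ ⨆ t', s' t' := hst ▸ le_ciSup (Ordinal.bddAbove_range s') t
    have h2 : (⨆ t', s' t') + 1 ≤ ⨆ t', s' t' := le_trans hge hle
    have h3 : (⨆ t', s' t') < (⨆ t', s' t') + 1 := by
      rw [Ordinal.add_one_eq_succ]; exact Order.lt_succ _
    exact absurd h2 (not_le.2 h3)
  rcases hU.2.2.2.2.1 T with h | h
  · exact absurd h hTnot
  · refine hU.2.2.1 _ _ h ?_
    rintro x ⟨-, hx⟩
    have hx' : ¬((SetOType x.val).cof.ord < SetOType x.val) := hx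
    exact le_antisymm (Ordinal.ord_cof_le (SetOType x.val)) (not_lt.1 hx')

/-- almost everywhere, `S ∩ x` is stationary in `sup x` -/
lemma stat_ae (hU : IsNormalFineUF κ μ U) (hμ : μ.IsRegular) (hκμ : κ < μ)
    (S : Set Ordinal) (hSsub : S ⊆ Set.Iio μ.ord) (hScof : ∀ α ∈ S, Ordinal.cof α < κ)
    (hSstat : IsStatIn S μ.ord) :
    {x : Pk κ μ | IsStatIn (S ∩ x.val) (sSup x.val)} ∈ U := by
  classical
  have hκ : Cardinal.aleph0.{0} < κ := kappa_big hμ hκμ hU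
  set T : Set (Pk κ μ) := {x | ¬ IsStatIn (S ∩ x.val) (sSup x.val)} with hTdef
  have hTnot : T ∉ U := by
    intro hT
    have hCex : ∀ x : Pk κ μ, x ∈ T → ∃ Cx, IsClubIn Cx (sSup x.val) ∧ S ∩ x.val ∩ Cx = ∅ := by
      intro x hx
      have hx' : ¬ IsStatIn (S ∩ x.val) (sSup x.val) := hx
      rw [IsStatIn] at hx'
      push_neg at hx'
      obtain ⟨Cx, hC1, hC2⟩ := hx'
      exact ⟨Cx, hC1, hC2⟩
    set C : Pk κ μ → Set Ordinal := fun x =>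
      if h : ∃ Cx, IsClubIn Cx (sSup x.val) ∧ S ∩ x.val ∩ Cx = ∅ then h.choose else ∅ with hCdef
    have hC : ∀ x ∈ T, IsClubIn (C x) (sSup x.val) ∧ S ∩ x.val ∩ C x = ∅ := by
      intro x hx
      have h := hCex x hx
      have hh : C x = h.choose := dif_pos h
      rw [hh]; exact h.choose_spec
    set ca : Ordinal → Pk κ μ → Ordinal := fun a x =>
      if h : ∃ yy ∈ C x, sSup (x.val ∩ Set.Iio a) ≤ yy then h.choose else 0 with hcadef
    have hL1 : ∀ a, a < μ.ord →
        {x : Pk κ μ | x ∈ T ∧ ca a x ∈ C x ∧ sSup (x.val ∩ Set.Iio a) ≤ ca a x} ∈ U := by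
      intro a ha
      have hsucc : a + 1 < μ.ord := by
        rw [Ordinal.add_one_eq_succ]; exact (muord_limit hμ).succ_lt ha
      refine hU.2.2.1 _ _ (hU.2.2.2.1 _ _ hT (hU.2.2.2.2.2.2.1 _ hsucc)) ?_
      rintro x ⟨hxT, hxa⟩
      have hclub := (hC x hxT).1
      have h1 : sSup (x.val ∩ Set.Iio a) < sSup x.val := by
        have h2 : a + 1 ≤ sSup x.val := le_csSup (bddx x) hxa
        have h3 : a < a + 1 := by rw [Ordinal.add_one_eq_succ]; exact Order.lt_succ a
        exact lt_of_le_of_lt (sSup_inter_Iio_le _ _) (lt_of_lt_of_le h3 h2)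
      obtain ⟨yy, hy1, hy2⟩ := hclub.2.1 _ h1
      have hex : ∃ yy ∈ C x, sSup (x.val ∩ Set.Iio a) ≤ yy := ⟨yy, hy1, hy2⟩
      have hh : ca a x = hex.choose := dif_pos hex
      exact ⟨hxT, by rw [hh]; exact hex.choose_spec⟩
    have hL2 : ∀ a, a < μ.ord → ∃ a', a < a' ∧ a' < μ.ord ∧
        {x : Pk κ μ | ca a x < sSup (x.val ∩ Set.Iio a')} ∈ U := by
      intro a ha
      have h1 := hL1 a ha
      have hpress : {x : Pk κ μ | ∃ yy ∈ x.val, ca a x < yy} ∈ U := by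
        refine hU.2.2.1 _ _ h1 ?_
        rintro x ⟨hxT, hx1, hx2⟩
        exact exists_lt_of_lt_sSup' ((hC x hxT).1.1 hx1)
      obtain ⟨e, heμ, he⟩ := press hU _ hpress
      refine ⟨max a e + 1, ?_, ?_, ?_⟩
      · rw [Ordinal.add_one_eq_succ]; exact lt_of_le_of_lt (le_max_left a e) (Order.lt_succ _)
      · rw [Ordinal.add_one_eq_succ]; exact (muord_limit hμ).succ_lt (max_lt ha heμ)
      · refine hU.2.2.1 _ _ he ?_
        rintro x ⟨hxe, hxlt⟩
        have hmem : e ∈ x.val ∩ Set.Iio (max a e + 1) := ⟨hxe, by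
          rw [Set.mem_Iio, Ordinal.add_one_eq_succ]
          exact lt_of_le_of_lt (le_max_right a e) (Order.lt_succ _)⟩
        exact lt_of_lt_of_le hxlt (le_csSup ((bddx x).mono Set.inter_subset_left) hmem)
    set next : {a : Ordinal // a < μ.ord} → {a : Ordinal // a < μ.ord} := fun a =>
      ⟨(hL2 a.1 a.2).choose, (hL2 a.1 a.2).choose_spec.2.1⟩ with hnextdef
    have hnext1 : ∀ a : {a : Ordinal // a < μ.ord}, a.1 < (next a).1 :=
      fun a => (hL2 a.1 a.2).choose_spec.1
    have hnext2 : ∀ a : {a : Ordinal // a < μ.ord},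
        {x : Pk κ μ | ca a.1 x < sSup (x.val ∩ Set.Iio (next a).1)} ∈ U :=
      fun a => (hL2 a.1 a.2).choose_spec.2.2
    set D : Set Ordinal := {a' | a' < μ.ord ∧ Order.IsSuccLimit a' ∧
      {x : Pk κ μ | x ∈ T ∧ a' ∈ C x} ∈ U} with hDdef
    have hDunb : ∀ b, b < μ.ord → ∃ a, a ∈ D ∧ b ≤ a := by
      intro b hb
      set A : ℕ → {a : Ordinal // a < μ.ord} := fun m => next^[m] ⟨b, hb⟩ with hAdef
      have hAsucc : ∀ m, A (m+1) = next (A m) := fun m => Function.iterate_succ_apply' next m _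
      have hAmono : ∀ m, (A m).1 < (A (m+1)).1 := by
        intro m; rw [hAsucc m]; exact hnext1 (A m)
      set astar : Ordinal := ⨆ m, (A m).1 with hastardef
      have hastarμ : astar < μ.ord := by
        refine Cardinal.iSup_lt_ord_of_isRegular hμ ?_ (fun m => (A m).2)
        rw [Cardinal.mk_nat]
        exact lt_trans hκ hκμ
      have hle : ∀ m, (A m).1 ≤ astar := fun m => le_ciSup (Ordinal.bddAbove_range _) m
      have hlt : ∀ m, (A m).1 < astar := fun m => lt_of_lt_of_le (hAmono m) (hle (m+1))
      have hexm : ∀ t, t < astar → ∃ m, t < (A m).1 := by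
        intro t ht; by_contra hcon; push_neg at hcon
        exact absurd (ciSup_le hcon) (not_le.2 ht)
      have hlim : Order.IsSuccLimit astar := by
        refine Ordinal.isSuccLimit_iff.2 ⟨?_, Order.isSuccPrelimit_iff_succ_lt.2 ?_⟩
        · exact ne_of_gt (lt_of_le_of_lt zero_le (hlt 0))
        · intro t ht
          obtain ⟨m, hm⟩ := hexm t ht
          exact lt_of_le_of_lt (Order.succ_le_of_lt hm) (hlt m)
      have hbig : {x : Pk κ μ | ∀ m : ℕ, x ∈
          ({x : Pk κ μ | x ∈ T ∧ ca (A m).1 x ∈ C x ∧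
              sSup (x.val ∩ Set.Iio (A m).1) ≤ ca (A m).1 x} ∩
           {x : Pk κ μ | ca (A m).1 x < sSup (x.val ∩ Set.Iio (A (m+1)).1)} ∩
           {x : Pk κ μ | (A m).1 ∈ x.val})} ∈ U := by
        refine comp' hU (by rwa [Cardinal.mk_nat]) _ (fun m => ?_)
        refine U_inter3 hU (hL1 (A m).1 (A m).2) ?_ (hU.2.2.2.2.2.2.1 _ (A m).2)
        rw [hAsucc m]
        exact hnext2 (A m)
      have hsuccastar : astar + 1 < μ.ord := by
        rw [Ordinal.add_one_eq_succ]; exact (muord_limit hμ).succ_lt hastarμ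
      refine ⟨astar, ⟨hastarμ, hlim, ?_⟩, hle 0⟩
      refine hU.2.2.1 _ _ (hU.2.2.2.1 _ _ hbig (hU.2.2.2.2.2.2.1 _ hsuccastar)) ?_
      rintro x ⟨hxm, hxa⟩
      have hxT : x ∈ T := (hxm 0).1.1.1
      have hclub := (hC x hxT).1
      have hsupx : astar < sSup x.val := by
        refine lt_of_lt_of_le ?_ (le_csSup (bddx x) hxa)
        rw [Ordinal.add_one_eq_succ]; exact Order.lt_succ astar
      have hcm : ∀ m, ca (A m).1 x ∈ C x := fun m => (hxm m).1.1.2.1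
      have hlo : ∀ m, sSup (x.val ∩ Set.Iio (A m).1) ≤ ca (A m).1 x := fun m => (hxm m).1.1.2.2
      have hhi : ∀ m, ca (A m).1 x < sSup (x.val ∩ Set.Iio (A (m+1)).1) := fun m => (hxm m).1.2
      have hmem : ∀ m, (A m).1 ∈ x.val := fun m => (hxm m).2
      have hcub : ∀ m, ca (A m).1 x < astar :=
        fun m => lt_of_lt_of_le (hhi m) (le_trans (sSup_inter_Iio_le _ _) (hle (m+1)))
      have hclb : ∀ m, (A m).1 ≤ ca (A (m+1)).1 x := by
        intro m
        refine le_trans ?_ (hlo (m+1))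
        exact le_csSup ((bddx x).mono Set.inter_subset_left) ⟨hmem m, hAmono m⟩
      have hacc : astar ∈ accPts (C x) := by
        refine ⟨lt_of_le_of_lt zero_le (hlt 0), ?_⟩
        intro t ht
        obtain ⟨m, hm⟩ := hexm t ht
        exact ⟨ca (A (m+1)).1 x, hcm (m+1), lt_of_lt_of_le hm (hclb m), hcub (m+1)⟩
      exact ⟨hxT, hclub.2.2 astar hsupx hacc⟩
    have hDacc : ∀ a, a < μ.ord → a ∈ accPts D → Ordinal.cof a < κ → a ∈ D := by
      intro a haμ hacc hcof
      have hlim : Order.IsSuccLimit a := by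
        refine Ordinal.isSuccLimit_iff.2 ⟨?_, Order.isSuccPrelimit_iff_succ_lt.2 ?_⟩
        · exact ne_of_gt hacc.1
        · intro t ht
          obtain ⟨dd, _, hd2, hd3⟩ := hacc.2 t ht
          exact lt_of_le_of_lt (Order.succ_le_of_lt hd2) hd3
      refine ⟨haμ, hlim, ?_⟩
      obtain ⟨ιc, g, hlsub, hmk⟩ := Ordinal.exists_lsub_cof a
      have hmkκ : Cardinal.mk ιc < κ := by rw [hmk]; exact hcof
      have hglt : ∀ i, g i < a := fun i => hlsub ▸ Ordinal.lt_lsub g i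
      have hdi : ∀ i : ιc, ∃ dd, dd ∈ D ∧ g i < dd ∧ dd < a := fun i => hacc.2 (g i) (hglt i)
      set d : ιc → Ordinal := fun i => (hdi i).choose with hddef
      have hd1 : ∀ i, {x : Pk κ μ | x ∈ T ∧ d i ∈ C x} ∈ U := fun i => (hdi i).choose_spec.1.2.2
      have hd2 : ∀ i, g i < d i := fun i => (hdi i).choose_spec.2.1
      have hd3 : ∀ i, d i < a := fun i => (hdi i).choose_spec.2.2
      have hsucca : a + 1 < μ.ord := by
        rw [Ordinal.add_one_eq_succ]; exact (muord_limit hμ).succ_lt haμ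
      have hbig := comp' hU hmkκ _ hd1
      refine hU.2.2.1 _ _ (hU.2.2.2.1 _ _ hbig (hU.2.2.2.2.2.2.1 _ hsucca)) ?_
      rintro x ⟨hxm, hxa⟩
      rcases isEmpty_or_nonempty ιc with hemp | hne
      · exfalso
        have hpos : (0 : Ordinal) < Ordinal.lsub g := by rw [hlsub]; exact hlim.pos
        obtain ⟨i, -⟩ := Ordinal.lt_lsub_iff.1 hpos
        exact (IsEmpty.false i).elim
      · have hxT : x ∈ T := (hxm (Classical.arbitrary ιc)).1
        have hclub := (hC x hxT).1
        have hsupx : a < sSup x.val := by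
          refine lt_of_lt_of_le ?_ (le_csSup (bddx x) hxa)
          rw [Ordinal.add_one_eq_succ]; exact Order.lt_succ a
        have hacc' : a ∈ accPts (C x) := by
          refine ⟨hlim.pos, ?_⟩
          intro t ht
          have ht' : t < Ordinal.lsub g := by rw [hlsub]; exact ht
          obtain ⟨i, hi⟩ := Ordinal.lt_lsub_iff.1 ht'
          exact ⟨d i, (hxm i).2, lt_of_le_of_lt hi (hd2 i), hd3 i⟩
        exact ⟨hxT, hclub.2.2 a hsupx hacc'⟩
    set Cl : Set Ordinal := D ∪ (accPts D ∩ Set.Iio μ.ord) with hCldef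
    have hclubCl : IsClubIn Cl μ.ord := by
      refine ⟨?_, ?_, ?_⟩
      · rintro a (ha | ha)
        · exact ha.1
        · exact ha.2
      · intro a ha
        obtain ⟨a', ha', hlea⟩ := hDunb a ha
        exact ⟨a', Or.inl ha', hlea⟩
      · intro a haμ hacc
        refine Or.inr ⟨⟨hacc.1, ?_⟩, haμ⟩
        intro t ht
        obtain ⟨z, hz1, hz2, hz3⟩ := hacc.2 t ht
        rcases hz1 with hz | hz
        · exact ⟨z, hz, hz2, hz3⟩
        · obtain ⟨w, hw1, hw2, hw3⟩ := hz.1.2 t hz2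
          exact ⟨w, hw1, hw2, lt_trans hw3 hz3⟩
    obtain ⟨a, haS, haC⟩ := hSstat Cl hclubCl
    have haμ : a < μ.ord := hSsub haS
    have hacof : Ordinal.cof a < κ := hScof a haS
    have haD : a ∈ D := by
      rcases haC with h | h
      · exact h
      · exact hDacc a haμ h.1 hacof
    obtain ⟨x, hx⟩ := U_ne hU (hU.2.2.2.1 _ _ haD.2.2 (hU.2.2.2.2.2.2.1 a haμ))
    obtain ⟨⟨hxT, hxC⟩, hxa⟩ := hx
    have hempty := (hC x hxT).2
    exact (Set.eq_empty_iff_forall_notMem.1 hempty) a ⟨⟨haS, hxa⟩, hxC⟩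
  rcases hU.2.2.2.2.1 T with h | h
  · exact absurd h hTnot
  · refine hU.2.2.1 _ _ h ?_
    rintro x ⟨-, hx⟩
    have hx' : ¬ ¬ IsStatIn (S ∩ x.val) (sSup x.val) := hx
    exact not_not.1 hx'

end Helpers

/-- If `κ` is `μ`-supercompact, `μ > κ` is regular, `S ⊆ E^μ_{<κ}` is stationary and `A` is
an algebra on `μ` with fewer than `κ` operations, then there is a set `X` generating a
subalgebra `B` with `o.t.(B) = o.t.(X)` a regular cardinal below `κ`, such that `S ∩ B` is
stationary in `sup B`. -/
theorem stmt2 (κ μ : Cardinal) (hμ : μ.IsRegular) (hκμ : κ < μ)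
    (hsc : ∃ U : Set (Set (Pk κ μ)), IsNormalFineUF κ μ U)
    (ι : Type) (hι : Cardinal.mk ι < κ)
    (n : ι → ℕ) (f : ∀ i, (Fin (n i) → Ordinal) → Ordinal)
    (hf : ∀ i v, (∀ j, v j < μ.ord) → f i v < μ.ord)
    (S : Set Ordinal) (hSsub : S ⊆ Set.Iio μ.ord)
    (hScof : ∀ α ∈ S, Ordinal.cof α < κ)
    (hSstat : IsStatIn S μ.ord) :
    ∃ X B : Set Ordinal, X ⊆ Set.Iio μ.ord ∧ B ⊆ Set.Iio μ.ord ∧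
      GeneratedBy n f X B ∧
      SetOType B = SetOType X ∧
      (∃ c : Cardinal, c.IsRegular ∧ c < κ ∧ SetOType B = Ordinal.lift.{1} c.ord) ∧
      IsStatIn (S ∩ B) (sSup B) := by
  classical
  obtain ⟨U, hU⟩ := hsc
  have hκ : Cardinal.aleph0.{0} < κ := kappa_big hμ hκμ hU
  have h1 := closure_ae hU hι n f hf
  have h2 := ot_regular_ae hU hμ
  have h3 := nat_subset_ae hU hμ hκ
  have h4 := stat_ae hU hμ hκμ S hSsub hScof hSstat
  obtain ⟨x, hx⟩ := U_ne hU (hU.2.2.2.1 _ _ (U_inter3 hU h1 h2 h3) h4)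
  obtain ⟨⟨⟨hclosed, hreg⟩, hnat⟩, hstat⟩ := hx
  refine ⟨x.val, x.val, x.2.1, x.2.1, ⟨subset_rfl, hclosed, fun B' hX _ => hX⟩, rfl, ?_, hstat⟩
  set τ : Ordinal.{1} := SetOType x.val with hτdef
  have hω : Ordinal.omega0.{1} ≤ τ := ot_omega_of x hnat
  have hcardτ : τ.card = Cardinal.mk ↥x.val := Ordinal.card_type _
  have hreg' : τ.cof.ord = τ := hreg
  have hcof_card : τ.cof = τ.card := by
    conv_rhs => rw [← hreg']
    rw [Cardinal.card_ord]
  have hlift : τ.card < Cardinal.lift.{1} κ := by rw [hcardτ]; exact x.2.2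
  obtain ⟨c, hcκ, hc_lift⟩ := Cardinal.lt_lift_iff.1 hlift
  have hτ_ord : τ = τ.card.ord := by rw [← hcof_card]; exact hreg'.symm
  have hτ_lift : τ = Ordinal.lift.{1} c.ord := by
    rw [hτ_ord, ← hc_lift, ← Cardinal.lift_ord]
  have hωc : Cardinal.aleph0.{0} ≤ c := by
    have h5 : Cardinal.aleph0.{1} ≤ τ.card := Ordinal.aleph0_le_card.2 hω
    rw [← hc_lift] at h5
    exact Cardinal.aleph0_le_lift.1 h5
  have hc_cof : c.ord.cof = c := by
    have h6 : τ.cof = Cardinal.lift.{1} c := by rw [hcof_card, ← hc_lift]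
    have h7 : τ.cof = Cardinal.lift.{1} c.ord.cof := by
      rw [hτ_lift, ← Ordinal.lift_cof]
    exact (Cardinal.lift_injective (h6.symm.trans h7)).symm
  exact ⟨c, ⟨hωc, le_of_eq hc_cof.symm⟩, hcκ, hτ_lift⟩
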